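/- Inverse formula for the FX-reprogrammed cipher (Appendix B.2 of the paper): Without any distinctness hypotheses on the transcript, the inverse of E^{T_j} factors as (E^{T_j})⁻¹ = swap(x_j ⊕ k₁, (E^{T_{j−1}})⁻¹(y_j ⊕ k₂)) ∘ swap(x_{j−1} ⊕ k₁, (E^{T_{j−2}})⁻¹(y_{j−1} ⊕ k₂)) ∘ ⋯ ∘ swap(x₁ ⊕ k₁, E⁻¹(y₁ ⊕ k₂)) ∘ E⁻¹, where the transposition with index i = j is applied last (outermost) and E⁻¹ first. -/

import Mathlib

/-- The reprogrammed permutations `E^{T_i}` of the FX hybrid argument: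
`E^{T_0} = E` and `E^{T_i} = swap(E^{T_{i-1}}(x_i ⊕ k₁), y_i ⊕ k₂) ∘ E^{T_{i-1}}`. -/
def fxReprog {V : Type*} [DecidableEq V] [Add V]
    (E : Equiv.Perm V) (k₁ k₂ : V) (x y : ℕ → V) : ℕ → Equiv.Perm V
  | 0 => E
  | i + 1 =>
      Equiv.swap (fxReprog E k₁ k₂ x y i (x (i + 1) + k₁)) (y (i + 1) + k₂) *
        fxReprog E k₁ k₂ x y i

/-- The product `swap(x_i ⊕ k₁, (E^{T_{i-1}})⁻¹(y_i ⊕ k₂)) ∘ ⋯ ∘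
swap(x₁ ⊕ k₁, E⁻¹(y₁ ⊕ k₂)) ∘ E⁻¹`, with the transposition of index `i`
outermost and `E⁻¹` innermost. -/
def fxInvProd {V : Type*} [DecidableEq V] [Add V]
    (E : Equiv.Perm V) (k₁ k₂ : V) (x y : ℕ → V) : ℕ → Equiv.Perm V
  | 0 => E⁻¹
  | i + 1 =>
      Equiv.swap (x (i + 1) + k₁) ((fxReprog E k₁ k₂ x y i)⁻¹ (y (i + 1) + k₂)) *
        fxInvProd E k₁ k₂ x y i

private lemma inv_mul_swap {V : Type*} [DecidableEq V] (f : Equiv.Perm V) (a b : V) :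
    f⁻¹ * Equiv.swap a b = Equiv.swap (f⁻¹ a) (f⁻¹ b) * f⁻¹ := by
  rw [Equiv.swap_apply_apply]; group

/-- Inverse formula for the FX-reprogrammed cipher (Appendix B.2): without any
distinctness hypotheses on the transcript,
`(E^{T_j})⁻¹ = swap(x_j ⊕ k₁, (E^{T_{j-1}})⁻¹(y_j ⊕ k₂)) ∘ ⋯ ∘
swap(x₁ ⊕ k₁, E⁻¹(y₁ ⊕ k₂)) ∘ E⁻¹`. -/
theorem fx_inverse_formula {n j : ℕ} (hn : 1 ≤ n)
    (E : Equiv.Perm (Fin n → ZMod 2)) (k₁ k₂ : Fin n → ZMod 2)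
    (x y : ℕ → Fin n → ZMod 2) :
    (fxReprog E k₁ k₂ x y j)⁻¹ = fxInvProd E k₁ k₂ x y j := by
  induction j with
  | zero => rfl
  | succ i ih =>
    show (_ * fxReprog E k₁ k₂ x y i)⁻¹ = _ * fxInvProd E k₁ k₂ x y i
    rw [mul_inv_rev, Equiv.swap_inv, inv_mul_swap, (show ∀ (f : Equiv.Perm (Fin n → ZMod 2)) x, f⁻¹ (f x) = x from fun f x => f.symm_apply_apply x), ih]
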